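/- Let α ∈ ℂ with α ∉ ℤ, N ∈ ℕ, ω_c > 0, μ ∈ [0, ω_c), c_0, …, c_N ∈ ℂ, and let g : [ω_c, ∞) → ℂ be measurable, locally integrable, with g(ω) − Σ_{k=0}^{N} c_k ω^{α−k} = O(ω^{Re α − N − 1}) as ω → +∞. Define a_m(μ) := Σ_{n=0}^{m} c_{m−n} (Γ(α+1−m+n)/Γ(α+1−m)) μ^n/n! for 0 ≤ m ≤ N. Then, as x → 0⁺, g(μ + 1/x) − Σ_{m=0}^{N} a_m(μ) x^{m−α} = O(x^{N+1−Re α}). -/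

import Mathlib

open MeasureTheory Complex Filter
open Finset Asymptotics Set

noncomputable def bcoef (β : ℂ) (n : ℕ) : ℂ := (∏ j ∈ range n, (β - j)) / n.factorial

lemma bcoef_succ (β : ℂ) (n : ℕ) :
    bcoef β (n + 1) * ((n : ℂ) + 1) = β * bcoef (β - 1) n := by
  have hp : ∏ j ∈ range (n + 1), (β - j) = β * ∏ j ∈ range n, ((β - 1) - j) := by
    rw [Finset.prod_range_succ']
    simp only [Nat.cast_zero, sub_zero]
    rw [mul_comm]
    congr 1
    refine Finset.prod_congr rfl fun j _ => ?_
    push_cast; ring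
  simp only [bcoef, hp, Nat.factorial_succ]
  have h1 : ((n + 1).factorial : ℂ) ≠ 0 := by exact_mod_cast Nat.factorial_ne_zero _
  have h2 : ((n).factorial : ℂ) ≠ 0 := by exact_mod_cast Nat.factorial_ne_zero _
  rw [Nat.factorial_succ] at h1
  push_cast at h1 ⊢
  field_simp

lemma deriv_sum_eq (β : ℂ) (M : ℕ) (s : ℝ) :
    (∑ n ∈ range (M + 1), bcoef β n * ((n : ℂ) * (s : ℂ) ^ (n - 1))) =
      β * ∑ n ∈ range M, bcoef (β - 1) n * (s : ℂ) ^ n := by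
  rw [Finset.sum_range_succ']
  simp only [Nat.cast_zero, zero_mul, mul_zero, add_zero]
  rw [Finset.mul_sum]
  refine Finset.sum_congr rfl fun n _ => ?_
  push_cast
  calc bcoef β (n + 1) * (((n : ℂ) + 1) * (s : ℂ) ^ n)
      = (bcoef β (n + 1) * ((n : ℂ) + 1)) * (s : ℂ) ^ n := by ring
    _ = β * (bcoef (β - 1) n * (s : ℂ) ^ n) := by rw [bcoef_succ]; ring

lemma hasDerivAt_rem (β : ℂ) (M : ℕ) (s : ℝ) (hs : |s| < 1) :
    HasDerivAt (fun t : ℝ => ((1 : ℂ) + t) ^ β - ∑ n ∈ range (M + 1), bcoef β n * (t : ℂ) ^ n)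
      (β * (((1 : ℂ) + s) ^ (β - 1) - ∑ n ∈ range M, bcoef (β - 1) n * (s : ℂ) ^ n)) s := by
  have hmem : (1 : ℂ) + (s : ℂ) ∈ Complex.slitPlane := by
    rw [Complex.mem_slitPlane_iff]; left
    simp only [Complex.add_re, Complex.one_re, Complex.ofReal_re]
    linarith [(abs_lt.mp hs).1]
  have h1' : HasDerivAt (fun z : ℂ => (1 + z) ^ β)
      (β * ((1 : ℂ) + s) ^ (β - 1) * 1) ((s : ℝ) : ℂ) :=
    ((hasDerivAt_id ((s : ℂ))).const_add 1).cpow_const hmem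
  have h1 : HasDerivAt (fun t : ℝ => ((1 : ℂ) + t) ^ β) (β * ((1 : ℂ) + s) ^ (β - 1)) s := by
    simpa using h1'.comp_ofReal
  have h2 : HasDerivAt (fun t : ℝ => ∑ n ∈ range (M + 1), bcoef β n * (t : ℂ) ^ n)
      (∑ n ∈ range (M + 1), bcoef β n * ((n : ℂ) * (s : ℂ) ^ (n - 1))) s :=
    HasDerivAt.fun_sum fun n _ => ((hasDerivAt_pow n ((s : ℂ))).comp_ofReal).const_mul (bcoef β n)
  have h3 := h1.fun_sub h2
  rw [deriv_sum_eq] at h3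
  convert h3 using 1
  case e'_4 => rfl
  ring

lemma rem_zero (β : ℂ) (M : ℕ) :
    ((1 : ℂ) + ((0 : ℝ) : ℂ)) ^ β - ∑ n ∈ range (M + 1), bcoef β n * (((0 : ℝ)) : ℂ) ^ n = 0 := by
  rw [Finset.sum_eq_single_of_mem 0 (Finset.mem_range.mpr (Nat.succ_pos M))]
  · simp [bcoef]
  · intro n _ hn
    simp [Complex.ofReal_zero, zero_pow hn]

lemma taylor_binom : ∀ (M : ℕ) (β : ℂ),
    (fun t : ℝ => ((1 : ℂ) + t) ^ β - ∑ n ∈ range M, bcoef β n * (t : ℂ) ^ n)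
      =O[nhds (0 : ℝ)] fun t => |t| ^ M := by
  intro M
  induction M with
  | zero =>
    intro β
    simp only [Finset.range_zero, Finset.sum_empty, sub_zero, pow_zero]
    have hmem : (1 : ℂ) + ((0 : ℝ) : ℂ) ∈ Complex.slitPlane := by
      rw [Complex.mem_slitPlane_iff]; left; simp
    have hc : ContinuousAt (fun t : ℝ => ((1 : ℂ) + t) ^ β) 0 :=
      ContinuousAt.comp (g := fun z : ℂ => z ^ β) (f := fun t : ℝ => (1 : ℂ) + t)
        (continuousAt_cpow_const hmem) (by fun_prop)
    exact hc.isBigO_one ℝ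
  | succ M ih =>
    intro β
    obtain ⟨C, hC⟩ := (ih (β - 1)).bound
    rw [Metric.eventually_nhds_iff] at hC
    obtain ⟨ε, hε, hCb⟩ := hC
    set δ := min (min ε 1) (1 / 2) with hδdef
    have hδpos : 0 < δ := by positivity
    rw [isBigO_iff]
    refine ⟨‖β‖ * C, ?_⟩
    have hev : ∀ᶠ t in nhds (0 : ℝ), |t| < δ := by
      filter_upwards [Metric.ball_mem_nhds (0 : ℝ) hδpos] with t ht
      simpa [Real.dist_eq] using ht
    filter_upwards [hev] with t ht
    have htlt1 : |t| < 1 := lt_of_lt_of_le ht (le_trans (min_le_left _ _) (min_le_right _ _))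
    have htltε : |t| < ε := lt_of_lt_of_le ht (le_trans (min_le_left _ _) (min_le_left _ _))
    have habs : ∀ y ∈ Set.uIcc (0 : ℝ) t, |y| ≤ |t| := by
      intro y hy
      rcases Set.mem_uIcc.mp hy with ⟨h1, h2⟩ | ⟨h1, h2⟩ <;> rw [abs_le] <;>
        constructor <;> nlinarith [abs_nonneg t, le_abs_self t, neg_abs_le t]
    have hC0 : 0 ≤ C := by
      have h0 := hCb (show dist (0 : ℝ) 0 < ε by simpa using hε)
      have : (0 : ℝ) ≤ C * ‖|(0 : ℝ)| ^ M‖ := le_trans (norm_nonneg _) h0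
      rcases Nat.eq_zero_or_pos M with hM | hM
      · simpa [hM] using this
      · by_contra hc
        push_neg at hc
        have h1 := hCb (show dist (δ / 2) 0 < ε by
          rw [Real.dist_eq, sub_zero]
          rw [abs_of_pos (by positivity)]
          calc δ / 2 < δ := by linarith
            _ ≤ ε := le_trans (min_le_left _ _) (min_le_left _ _))
        have hpos : 0 < |δ / 2| ^ M := pow_pos (abs_pos.mpr (by positivity)) M
        have : C * ‖|δ / 2| ^ M‖ < 0 := by
          rw [Real.norm_eq_abs, _root_.abs_of_nonneg (le_of_lt hpos)]
          exact mul_neg_of_neg_of_pos hc hpos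
        linarith [le_trans (norm_nonneg _) h1]
    have hbound : ∀ y ∈ Set.uIcc (0 : ℝ) t,
        ‖β * (((1 : ℂ) + y) ^ (β - 1) - ∑ n ∈ range M, bcoef (β - 1) n * (y : ℂ) ^ n)‖
          ≤ ‖β‖ * (C * |t| ^ M) := by
      intro y hy
      have hyt := habs y hy
      have hy1 := hCb (show dist y 0 < ε by
        rw [Real.dist_eq, sub_zero]; exact lt_of_le_of_lt hyt htltε)
      rw [Real.norm_eq_abs, _root_.abs_pow, _root_.abs_abs] at hy1
      rw [norm_mul]
      refine mul_le_mul_of_nonneg_left ?_ (norm_nonneg β)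
      refine le_trans hy1 (mul_le_mul_of_nonneg_left ?_ hC0)
      exact pow_le_pow_left₀ (abs_nonneg y) hyt M
    have hderiv : ∀ y ∈ Set.uIcc (0 : ℝ) t, HasDerivWithinAt
        (fun t : ℝ => ((1 : ℂ) + t) ^ β - ∑ n ∈ range (M + 1), bcoef β n * (t : ℂ) ^ n)
        (β * (((1 : ℂ) + y) ^ (β - 1) - ∑ n ∈ range M, bcoef (β - 1) n * (y : ℂ) ^ n))
        (Set.uIcc (0 : ℝ) t) y := fun y hy =>
      (hasDerivAt_rem β M y (lt_of_le_of_lt (habs y hy) htlt1)).hasDerivWithinAt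
    have hmvt := Convex.norm_image_sub_le_of_norm_hasDerivWithin_le hderiv hbound
      (convex_uIcc _ _) Set.left_mem_uIcc Set.right_mem_uIcc
    rw [rem_zero, sub_zero] at hmvt
    calc ‖((1 : ℂ) + t) ^ β - ∑ n ∈ range (M + 1), bcoef β n * (t : ℂ) ^ n‖
        ≤ ‖β‖ * (C * |t| ^ M) * ‖t - 0‖ := hmvt
      _ = ‖β‖ * C * (|t| ^ M * |t|) := by rw [sub_zero, Real.norm_eq_abs]; ring
      _ = ‖β‖ * C * ‖|t| ^ (M + 1)‖ := by
          rw [Real.norm_eq_abs, _root_.abs_of_nonneg (pow_nonneg (abs_nonneg t) (M + 1)),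
            pow_succ]

lemma gamma_prod (β : ℂ) (hβ : ∀ m : ℤ, β ≠ (m : ℂ)) (n : ℕ) :
    Complex.Gamma (β + 1) = (∏ j ∈ range n, (β - j)) * Complex.Gamma (β + 1 - n) := by
  induction n with
  | zero => simp
  | succ n ih =>
    have h1 : β - (n : ℂ) ≠ 0 := by
      intro h
      exact hβ n (by rw [← sub_eq_zero]; exact_mod_cast h)
    have h2 : Complex.Gamma (β + 1 - n) = (β - n) * Complex.Gamma (β + 1 - (n + 1 : ℕ)) := by
      have : β + 1 - (n : ℂ) = (β - n) + 1 := by ring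
      rw [this, Complex.Gamma_add_one _ h1]
      congr 1
      push_cast; ring
    rw [ih, h2, prod_range_succ]; ring

lemma gamma_ratio (β : ℂ) (hβ : ∀ m : ℤ, β ≠ (m : ℂ)) (n : ℕ) :
    Complex.Gamma (β + 1) / Complex.Gamma (β + 1 - n) = ∏ j ∈ range n, (β - j) := by
  have hne : Complex.Gamma (β + 1 - n) ≠ 0 := by
    apply Complex.Gamma_ne_zero
    intro m h
    apply hβ ((n : ℤ) - 1 - (m : ℤ))
    have : β = -(m : ℂ) - 1 + n := by linear_combination h
    rw [this]; push_cast; ring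
  rw [gamma_prod β hβ n]
  field_simp

lemma sum_reindex {M : Type*} [AddCommMonoid M] (f : ℕ → ℕ → M) (N : ℕ) :
    ∑ m ∈ range (N + 1), ∑ n ∈ range (m + 1), f (m - n) n
      = ∑ k ∈ range (N + 1), ∑ n ∈ range (N + 1 - k), f k n := by
  rw [Finset.sum_sigma', Finset.sum_sigma']
  refine Finset.sum_nbij' (fun p => ⟨p.1 - p.2, p.2⟩) (fun p => ⟨p.1 + p.2, p.2⟩)
    ?_ ?_ ?_ ?_ ?_
  · rintro ⟨m, n⟩ hp
    simp only [Finset.mem_sigma, Finset.mem_range] at hp ⊢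
    omega
  · rintro ⟨k, n⟩ hp
    simp only [Finset.mem_sigma, Finset.mem_range] at hp ⊢
    omega
  · rintro ⟨m, n⟩ hp
    simp only [Finset.mem_sigma, Finset.mem_range] at hp
    exact Sigma.ext (by dsimp; omega) (by simp)
  · rintro ⟨k, n⟩ hp
    exact Sigma.ext (by dsimp; omega) (by simp)
  · rintro ⟨m, n⟩ hp
    rfl

lemma cpow_split (α' : ℂ) (μ x : ℝ) (hμ0 : 0 ≤ μ) (hx : 0 < x) :
    ((μ + 1 / x : ℝ) : ℂ) ^ α' = ((1 + μ * x : ℝ) : ℂ) ^ α' * (x : ℂ) ^ (-α') := by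
  have h1 : (μ + 1 / x : ℝ) = (1 + μ * x) * x⁻¹ := by field_simp; ring
  have h2 : (0 : ℝ) ≤ 1 + μ * x := by positivity
  rw [h1, Complex.ofReal_mul, Complex.mul_cpow_ofReal_nonneg h2 (le_of_lt (inv_pos.mpr hx)),
    Complex.ofReal_inv, Complex.inv_cpow _ _ (by
      rw [Complex.arg_ofReal_of_nonneg (le_of_lt hx)]
      exact Real.pi_ne_zero.symm), ← Complex.cpow_neg]

lemma Ek_bigO (α : ℂ) (μ : ℝ) (hμ0 : 0 ≤ μ) (N k : ℕ) (hk : k ≤ N) (ck : ℂ) :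
    (fun x : ℝ => ck * (((μ + 1 / x : ℝ) : ℂ) ^ (α - (k : ℂ)) -
        (x : ℂ) ^ ((k : ℂ) - α) * ∑ n ∈ range (N + 1 - k), bcoef (α - k) n * ((μ * x : ℝ) : ℂ) ^ n))
      =O[nhdsWithin 0 (Set.Ioi (0 : ℝ))] fun x => x ^ ((N : ℝ) + 1 - α.re) := by
  set F := nhdsWithin (0 : ℝ) (Set.Ioi (0 : ℝ)) with hF
  set M := N + 1 - k with hM
  have hxpos : ∀ᶠ x : ℝ in F, 0 < x := eventually_mem_nhdsWithin
  -- eventual rewriting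
  have heq : (fun x : ℝ => ck * (((μ + 1 / x : ℝ) : ℂ) ^ (α - (k : ℂ)) -
        (x : ℂ) ^ ((k : ℂ) - α) * ∑ n ∈ range M, bcoef (α - k) n * ((μ * x : ℝ) : ℂ) ^ n))
      =ᶠ[F] fun x : ℝ => ck * ((x : ℂ) ^ ((k : ℂ) - α) *
        (((1 : ℂ) + ((μ * x : ℝ) : ℂ)) ^ (α - (k : ℂ))
          - ∑ n ∈ range M, bcoef (α - k) n * ((μ * x : ℝ) : ℂ) ^ n)) := by
    filter_upwards [hxpos] with x hx
    rw [cpow_split (α - (k : ℂ)) μ x hμ0 hx, neg_sub]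
    have : ((1 + μ * x : ℝ) : ℂ) = (1 : ℂ) + ((μ * x : ℝ) : ℂ) := by push_cast; ring
    rw [this]; ring
  rw [hF] at heq ⊢
  refine heq.trans_isBigO ?_
  -- factor 1 : the cpow
  have h1 : (fun x : ℝ => (x : ℂ) ^ ((k : ℂ) - α)) =O[F] fun x => x ^ ((k : ℝ) - α.re) := by
    refine IsBigO.of_bound 1 ?_
    filter_upwards [hxpos] with x hx
    rw [Complex.norm_cpow_eq_rpow_re_of_pos hx, one_mul, Real.norm_eq_abs,
      _root_.abs_of_nonneg (Real.rpow_nonneg (le_of_lt hx) _)]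
    have : ((k : ℂ) - α).re = (k : ℝ) - α.re := by simp [Complex.sub_re]
    rw [this]
  -- factor 2 : the remainder
  have hT : Tendsto (fun x : ℝ => μ * x) F (nhds 0) := by
    have hc : Continuous (fun x : ℝ => μ * x) := continuous_const.mul continuous_id
    have h : Tendsto (fun x : ℝ => μ * x) (nhdsWithin 0 (Set.Ioi (0 : ℝ))) (nhds (μ * 0)) :=
      (hc.tendsto 0).mono_left nhdsWithin_le_nhds
    simpa using h
  have h2 := (taylor_binom M (α - k)).comp_tendsto hT
  have h2' : (fun x : ℝ => ((1 : ℂ) + ((μ * x : ℝ) : ℂ)) ^ (α - (k : ℂ))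
        - ∑ n ∈ range M, bcoef (α - k) n * ((μ * x : ℝ) : ℂ) ^ n)
      =O[F] fun x : ℝ => x ^ ((M : ℕ) : ℝ) := by
    refine h2.trans (IsBigO.of_bound (μ ^ M) ?_)
    filter_upwards [hxpos] with x hx
    simp only [Function.comp_apply, Real.norm_eq_abs, Real.rpow_natCast]
    rw [_root_.abs_of_nonneg (mul_nonneg hμ0 hx.le),
      _root_.abs_of_nonneg (pow_nonneg (mul_nonneg hμ0 hx.le) M),
      _root_.abs_of_nonneg (pow_nonneg hx.le M), mul_pow]
  -- product
  have h3 := h1.mul h2'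
  have h4 : (fun x : ℝ => x ^ ((k : ℝ) - α.re) * x ^ ((M : ℕ) : ℝ))
      =ᶠ[F] fun x => x ^ ((N : ℝ) + 1 - α.re) := by
    filter_upwards [hxpos] with x hx
    rw [← Real.rpow_add hx]
    congr 1
    have : ((M : ℕ) : ℝ) = (N : ℝ) + 1 - (k : ℝ) := by
      rw [hM]
      push_cast [Nat.cast_sub (by omega : k ≤ N + 1)]
      ring
    rw [this]; ring
  exact ((h3.trans_eventuallyEq h4).const_mul_left ck).congr_left fun x => by ring

lemma sum_a_eq (α : ℂ) (hα : ∀ n : ℤ, α ≠ (n : ℂ)) (N : ℕ) (μ : ℝ) (c : ℕ → ℂ) (a : ℕ → ℂ)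
    (ha : ∀ m : ℕ, a m = ∑ n ∈ Finset.range (m + 1),
      c (m - n) * (Complex.Gamma (α + 1 - (m : ℂ) + (n : ℂ)) / Complex.Gamma (α + 1 - (m : ℂ)))
        * (μ : ℂ) ^ n / (n.factorial : ℂ))
    (x : ℝ) (hx : 0 < x) :
    ∑ m ∈ Finset.range (N + 1), a m * (x : ℂ) ^ ((m : ℂ) - α)
      = ∑ k ∈ Finset.range (N + 1), c k * ((x : ℂ) ^ ((k : ℂ) - α) *
          ∑ n ∈ Finset.range (N + 1 - k), bcoef (α - (k : ℂ)) n * ((μ * x : ℝ) : ℂ) ^ n) := by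
  have hx0 : (x : ℂ) ≠ 0 := Complex.ofReal_ne_zero.mpr hx.ne'
  set f : ℕ → ℕ → ℂ := fun k n => c k * ((∏ j ∈ range n, (α - (k : ℂ) - (j : ℂ))) / (n.factorial : ℂ))
    * ((μ : ℂ)) ^ n * ((x : ℂ) ^ n * (x : ℂ) ^ ((k : ℂ) - α)) with hf
  have step1 : ∀ m ∈ Finset.range (N + 1), a m * (x : ℂ) ^ ((m : ℂ) - α)
      = ∑ n ∈ Finset.range (m + 1), f (m - n) n := by
    intro m hm
    rw [ha m, Finset.sum_mul]
    refine Finset.sum_congr rfl fun n hn => ?_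
    have hnm : n ≤ m := by simpa [Nat.lt_succ_iff] using Finset.mem_range.mp hn
    have hcast : ((m - n : ℕ) : ℂ) = (m : ℂ) - (n : ℂ) := by push_cast [hnm]; ring
    have hβ : ∀ j : ℤ, (α - (m : ℂ) + (n : ℂ)) ≠ (j : ℂ) := by
      intro j h
      apply hα ((j : ℤ) + (m : ℤ) - (n : ℤ))
      push_cast
      linear_combination h
    have hg := gamma_ratio (α - (m : ℂ) + (n : ℂ)) hβ n
    have e1 : α + 1 - (m : ℂ) + (n : ℂ) = (α - (m : ℂ) + (n : ℂ)) + 1 := by ring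
    have e2 : α + 1 - (m : ℂ) = (α - (m : ℂ) + (n : ℂ)) + 1 - (n : ℂ) := by ring
    have e3 : (m : ℂ) - α = (n : ℂ) + ((m : ℂ) - (n : ℂ) - α) := by ring
    rw [e1, e2, hg, e3, Complex.cpow_add _ _ hx0, Complex.cpow_natCast, hf]
    simp only [hcast]
    have e4 : ∏ j ∈ range n, (α - (m : ℂ) + (n : ℂ) - (j : ℂ))
        = ∏ j ∈ range n, (α - ((m : ℂ) - (n : ℂ)) - (j : ℂ)) :=
      Finset.prod_congr rfl fun j _ => by ring
    rw [e4]
    ring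
  calc ∑ m ∈ Finset.range (N + 1), a m * (x : ℂ) ^ ((m : ℂ) - α)
      = ∑ m ∈ Finset.range (N + 1), ∑ n ∈ Finset.range (m + 1), f (m - n) n :=
        Finset.sum_congr rfl step1
    _ = ∑ k ∈ Finset.range (N + 1), ∑ n ∈ Finset.range (N + 1 - k), f k n := sum_reindex f N
    _ = _ := by
        refine Finset.sum_congr rfl fun k hk => ?_
        refine Eq.trans (Finset.sum_congr rfl fun n hn => ?_)
          (by rw [← Finset.mul_sum, ← Finset.mul_sum])
        rw [hf]
        simp only [bcoef]
        have : ((μ * x : ℝ) : ℂ) = (μ : ℂ) * (x : ℂ) := by push_cast; ring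
        rw [this, mul_pow]
        ring


/-- With `a_m(μ) = ∑_{n=0}^m c_{m−n} (Γ(α+1−m+n)/Γ(α+1−m)) μⁿ/n!`, the change
of variable `ω = μ + 1/x` turns the asymptotic expansion of `g` at `ω → +∞` into
`g(μ + 1/x) − ∑_{m=0}^N a_m(μ) x^{m−α} = O(x^{N+1−Re α})` as `x → 0⁺`. -/
theorem stmt11 (α : ℂ) (hα : ∀ n : ℤ, α ≠ (n : ℂ)) (N : ℕ) (ωc μ : ℝ)
    (hωc : 0 < ωc) (hμ0 : 0 ≤ μ) (hμ : μ < ωc) (c : ℕ → ℂ) (g : ℝ → ℂ)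
    (hmeas : Measurable g)
    (hloc : LocallyIntegrableOn g (Set.Ici ωc))
    (hasymp : (fun ω : ℝ => g ω - ∑ k ∈ Finset.range (N + 1), c k * (ω : ℂ) ^ (α - (k : ℂ)))
      =O[Filter.atTop] fun ω : ℝ => ω ^ (α.re - (N : ℝ) - 1))
    (a : ℕ → ℂ)
    (ha : ∀ m : ℕ, a m = ∑ n ∈ Finset.range (m + 1),
      c (m - n) * (Complex.Gamma (α + 1 - (m : ℂ) + (n : ℂ)) / Complex.Gamma (α + 1 - (m : ℂ)))
        * (μ : ℂ) ^ n / (n.factorial : ℂ)) :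
    (fun x : ℝ => g (μ + 1 / x) - ∑ m ∈ Finset.range (N + 1), a m * (x : ℂ) ^ ((m : ℂ) - α))
      =O[nhdsWithin 0 (Set.Ioi 0)] fun x : ℝ => x ^ ((N : ℝ) + 1 - α.re) := by
  have hxpos : ∀ᶠ x : ℝ in nhdsWithin 0 (Set.Ioi (0 : ℝ)), 0 < x := eventually_mem_nhdsWithin
  -- Step 1 : change of variables tends to atTop
  have hT : Tendsto (fun x : ℝ => μ + 1 / x) (nhdsWithin 0 (Set.Ioi (0 : ℝ))) atTop := by
    have h0 : Tendsto (fun x : ℝ => x⁻¹) (nhdsWithin 0 (Set.Ioi (0 : ℝ))) atTop :=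
      tendsto_inv_nhdsGT_zero
    have h1 := tendsto_atTop_add_const_left (nhdsWithin 0 (Set.Ioi (0 : ℝ))) μ h0
    simpa [one_div] using h1
  -- Step 2 : compose asymptotics
  have hA : (fun x : ℝ => g (μ + 1 / x) -
      ∑ k ∈ Finset.range (N + 1), c k * (((μ + 1 / x : ℝ)) : ℂ) ^ (α - (k : ℂ)))
      =O[nhdsWithin 0 (Set.Ioi (0 : ℝ))] fun x : ℝ => (μ + 1 / x) ^ (α.re - (N : ℝ) - 1) :=
    hasymp.comp_tendsto hT
  -- Step 3 : bound the rpow of μ + 1/x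
  have hB : (fun x : ℝ => (μ + 1 / x) ^ (α.re - (N : ℝ) - 1))
      =O[nhdsWithin 0 (Set.Ioi (0 : ℝ))] fun x : ℝ => x ^ ((N : ℝ) + 1 - α.re) := by
    have heq : (fun x : ℝ => (μ + 1 / x) ^ (α.re - (N : ℝ) - 1))
        =ᶠ[nhdsWithin 0 (Set.Ioi (0 : ℝ))]
        fun x : ℝ => (1 + μ * x) ^ (α.re - (N : ℝ) - 1) * x ^ ((N : ℝ) + 1 - α.re) := by
      filter_upwards [hxpos] with x hx
      have h1 : (μ + 1 / x : ℝ) = (1 + μ * x) / x := by field_simp; ring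
      rw [h1, Real.div_rpow (by positivity) hx.le, div_eq_mul_inv,
        ← Real.rpow_neg hx.le]
      congr 2
      ring
    refine heq.trans_isBigO ?_
    have hc : ContinuousAt (fun x : ℝ => (1 + μ * x) ^ (α.re - (N : ℝ) - 1)) 0 := by
      apply ContinuousAt.rpow_const
      · fun_prop
      · left; simp
    have h1 : (fun x : ℝ => (1 + μ * x) ^ (α.re - (N : ℝ) - 1))
        =O[nhdsWithin 0 (Set.Ioi (0 : ℝ))] (fun _ => (1 : ℝ)) :=
      (hc.mono_left nhdsWithin_le_nhds).isBigO_one ℝ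
    have h2 := h1.mul (isBigO_refl (fun x : ℝ => x ^ ((N : ℝ) + 1 - α.re))
      (nhdsWithin 0 (Set.Ioi (0 : ℝ))))
    simpa using h2
  have hA' := hA.trans hB
  -- Step 5/6 : sum of per-k bounds
  have hsum : (fun x : ℝ => ∑ k ∈ Finset.range (N + 1),
      c k * (((μ + 1 / x : ℝ) : ℂ) ^ (α - (k : ℂ)) -
        (x : ℂ) ^ ((k : ℂ) - α) *
          ∑ n ∈ Finset.range (N + 1 - k), bcoef (α - k) n * ((μ * x : ℝ) : ℂ) ^ n))
      =O[nhdsWithin 0 (Set.Ioi (0 : ℝ))] fun x : ℝ => x ^ ((N : ℝ) + 1 - α.re) :=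
    IsBigO.fun_sum fun k hk =>
      Ek_bigO α μ hμ0 N k (by simpa [Nat.lt_succ_iff] using Finset.mem_range.mp hk) (c k)
  -- Step 7 : eventual identification
  have hkey : (fun x : ℝ => g (μ + 1 / x) -
      ∑ m ∈ Finset.range (N + 1), a m * (x : ℂ) ^ ((m : ℂ) - α))
      =ᶠ[nhdsWithin 0 (Set.Ioi (0 : ℝ))]
      fun x : ℝ => (g (μ + 1 / x) -
        ∑ k ∈ Finset.range (N + 1), c k * (((μ + 1 / x : ℝ)) : ℂ) ^ (α - (k : ℂ)))
        + ∑ k ∈ Finset.range (N + 1),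
          c k * (((μ + 1 / x : ℝ) : ℂ) ^ (α - (k : ℂ)) -
            (x : ℂ) ^ ((k : ℂ) - α) *
              ∑ n ∈ Finset.range (N + 1 - k), bcoef (α - k) n * ((μ * x : ℝ) : ℂ) ^ n) := by
    filter_upwards [hxpos] with x hx
    rw [sum_a_eq α hα N μ c a ha x hx]
    simp only [mul_sub]
    rw [Finset.sum_sub_distrib]
    ring
  exact hkey.trans_isBigO (hA'.add hsum)
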